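/- arXiv:1411.3565 — 5 statements merged into one kernel-verified Lean document; each statement's English description precedes it below -/
import Mathlib

section
/- There exists a constant C > 0 such that for every real number d > 0, the d-chromatic number of the hyperbolic plane (the upper half-plane with its hyperbolic metric) satisfies χ(ℍ, d) ≤ C · e^d. -/
set_option maxHeartbeats 1000000

open scoped ENNReal

/-- The distance-`d` graph of a (pseudo)metric space: vertices are the points of the space,
with an edge between two distinct points exactly when they are at distance `d`. -/
def distGraph (X : Type*) [PseudoMetricSpace X] (d : ℝ) : SimpleGraph X where
  Adj x y := x ≠ y ∧ dist x y = d
  symm := ⟨fun x y ⟨hxy, hd⟩ => ⟨hxy.symm, by rwa [dist_comm]⟩⟩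
  loopless := ⟨fun x ⟨h, _⟩ => h rfl⟩

/-- Algebraic contradiction for two points in the same box. -/
private lemma auxSameBox (d s u A a b Dx D Y : ℝ)
    (hd : 0 < d) (hsd : s = d / 2) (hu1 : 1 + s ≤ u)
    (hA : 0 < A) (ha1 : A ≤ a) (ha2 : a < A * u) (hb1 : A ≤ b) (hb2 : b < A * u)
    (hdx : Dx ^ 2 < (s * A) ^ 2)
    (hD2 : D ^ 2 = Dx ^ 2 + (a - b) ^ 2)
    (hYu : Y * (u * u) = 1)
    (hDeq : D ^ 2 = (u * u + Y - 2) * (a * b)) : False := by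
  have hs : 0 < s := by rw [hsd]; linarith
  have hu0 : (0 : ℝ) < u := by linarith
  have ha0 : 0 < a := lt_of_lt_of_le hA ha1
  have hb0 : 0 < b := lt_of_lt_of_le hA hb1
  have key1 : D ^ 2 * (u * u) = (u * u - 1) ^ 2 * (a * b) := by
    rw [hDeq]; linear_combination (a * b) * hYu
  have hdy : (a - b) ^ 2 * u < (a * b) * (u - 1) ^ 2 := by
    have f1 : a < u * b := by nlinarith
    have f2 : b < u * a := by nlinarith
    nlinarith [mul_pos (sub_pos.mpr f1) (sub_pos.mpr f2)]
  have hP : 0 < (u - 1) ^ 2 * (a * b) := by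
    have h1 : (0:ℝ) < (u - 1) ^ 2 := by nlinarith
    exact mul_pos h1 (mul_pos ha0 hb0)
  have k5 : A ^ 2 ≤ a * b := by nlinarith
  have f1 : Dx ^ 2 * (u * u) < (s * A) ^ 2 * (u * u) :=
    mul_lt_mul_of_pos_right hdx (by positivity)
  have f3 : (s * A) ^ 2 * (u * u) ≤ ((u - 1) ^ 2 * (a * b)) * (u * u) := by
    have h1 : s ^ 2 ≤ (u - 1) ^ 2 := by nlinarith
    have h2 : (s * A) ^ 2 ≤ (u - 1) ^ 2 * (a * b) := by nlinarith
    exact mul_le_mul_of_nonneg_right h2 (by positivity)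
  have f2 : (a - b) ^ 2 * (u * u) < ((a * b) * (u - 1) ^ 2) * u := by
    calc (a - b) ^ 2 * (u * u) = ((a - b) ^ 2 * u) * u := by ring
      _ < ((a * b) * (u - 1) ^ 2) * u := mul_lt_mul_of_pos_right hdy hu0
  nlinarith [key1, hD2, f1, f2, f3, hP, mul_pos hP hu0]

/-- Algebraic contradiction for two points in the same band but distant boxes. -/
private lemma auxDiffBox (d X Y A u a b D : ℝ)
    (hd : 0 < d) (hX : X = u * u) (hu0 : 0 < u)
    (hXY : X * Y = 1) (hY1 : 1 - d ≤ Y) (hX1 : 1 < X)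
    (hA : 0 < A) (ha0 : 0 < a) (hb0 : 0 < b) (ha2 : a < A * u) (hb2 : b < A * u)
    (hDeq : D ^ 2 = (X + Y - 2) * (a * b))
    (hDgt : 3 * X * (d / 2 * A) < D) : False := by
  have hX0 : 0 < X := by nlinarith
  have hYpos : 0 < Y := by nlinarith
  have hYle1 : Y ≤ 1 := by nlinarith
  have hXY2 : (0 : ℝ) ≤ X + Y - 2 := by nlinarith [mul_nonneg (sub_nonneg.mpr hX1.le) (sub_nonneg.mpr hYle1)]
  have h1 : (X + Y - 2) * Y = (1 - Y) ^ 2 := by linear_combination hXY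
  have h2 : (1 - Y) ^ 2 ≤ d ^ 2 := by nlinarith
  have hXYd : X + Y - 2 ≤ d ^ 2 * X := by
    have h3 : (X + Y - 2) * Y ≤ d ^ 2 := by rw [h1]; exact h2
    have h4 : ((X + Y - 2) * Y) * X ≤ d ^ 2 * X := mul_le_mul_of_nonneg_right h3 hX0.le
    calc X + Y - 2 = ((X + Y - 2) * Y) * X := by
          linear_combination (-(X + Y - 2)) * hXY
      _ ≤ d ^ 2 * X := h4
  have hab : a * b < A ^ 2 * X := by rw [hX]; nlinarith
  have hDle : D ^ 2 ≤ (d ^ 2 * X) * (A ^ 2 * X) := by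
    rw [hDeq]
    have g1 : (X + Y - 2) * (a * b) ≤ (X + Y - 2) * (A ^ 2 * X) :=
      mul_le_mul_of_nonneg_left hab.le hXY2
    have g2 : (X + Y - 2) * (A ^ 2 * X) ≤ (d ^ 2 * X) * (A ^ 2 * X) :=
      mul_le_mul_of_nonneg_right hXYd (by positivity)
    linarith
  have hD0 : (0:ℝ) ≤ 3 * X * (d / 2 * A) := by positivity
  have hDgtsq : (3 * X * (d / 2 * A)) ^ 2 < D ^ 2 := by nlinarith
  nlinarith [mul_pos (mul_pos hd hd) (mul_pos (mul_pos hX0 hX0) (mul_pos hA hA))]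

open UpperHalfPlane in
/-- There is a constant `C > 0` such that for every `d > 0` the `d`-chromatic number of the
hyperbolic plane is at most `C * e^d`. -/
theorem upperHalfPlane_chromatic_le_exp :
    ∃ C : ℝ, 0 < C ∧ ∀ d : ℝ, 0 < d →
      ((distGraph UpperHalfPlane d).chromaticNumber : ℝ≥0∞) ≤
        ENNReal.ofReal (C * Real.exp d) := by
  refine ⟨20, by norm_num, fun d hd => ?_⟩
  set s : ℝ := d / 2 with hs_def
  have hs : 0 < s := by positivity
  set M : ℕ := ⌈3 * Real.exp d⌉₊ + 1 with hM_def
  have hMpos : 0 < M := Nat.succ_pos _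
  haveI : NeZero M := ⟨hMpos.ne'⟩
  have hM3 : 3 * Real.exp d ≤ (M : ℝ) - 1 := by
    have h := Nat.le_ceil (3 * Real.exp d)
    rw [hM_def]; push_cast; linarith
  set kf : ℍ → ℤ := fun z => ⌊Real.log z.im / s⌋ with hkf
  set mf : ℍ → ℤ := fun z => ⌊z.re / (s * Real.exp (kf z * s))⌋ with hmf
  -- log-band bounds
  have hlog : ∀ z : ℍ, (kf z : ℝ) * s ≤ Real.log z.im ∧
      Real.log z.im < (kf z : ℝ) * s + s := by
    intro z
    have h1 : (kf z : ℝ) ≤ Real.log z.im / s := Int.floor_le _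
    have h2 : Real.log z.im / s < (kf z : ℝ) + 1 := Int.lt_floor_add_one _
    constructor
    · calc (kf z : ℝ) * s ≤ (Real.log z.im / s) * s := by nlinarith
        _ = Real.log z.im := by field_simp
    · have := (div_lt_iff₀ hs).mp h2; linarith
  -- exp-band bounds
  have hband : ∀ z : ℍ, Real.exp ((kf z : ℝ) * s) ≤ z.im ∧
      z.im < Real.exp ((kf z : ℝ) * s) * Real.exp s := by
    intro z
    obtain ⟨h1, h2⟩ := hlog z
    constructor
    · calc Real.exp ((kf z : ℝ) * s) ≤ Real.exp (Real.log z.im) := Real.exp_le_exp.mpr h1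
        _ = z.im := Real.exp_log z.im_pos
    · calc z.im = Real.exp (Real.log z.im) := (Real.exp_log z.im_pos).symm
        _ < Real.exp ((kf z : ℝ) * s + s) := Real.exp_lt_exp.mpr h2
        _ = Real.exp ((kf z : ℝ) * s) * Real.exp s := Real.exp_add _ _
  -- box bounds
  have hbox : ∀ z : ℍ, (mf z : ℝ) * (s * Real.exp ((kf z : ℝ) * s)) ≤ z.re ∧
      z.re < ((mf z : ℝ) + 1) * (s * Real.exp ((kf z : ℝ) * s)) := by
    intro z
    have hw0 : (0 : ℝ) < s * Real.exp ((kf z : ℝ) * s) := by positivity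
    have h1 : (mf z : ℝ) ≤ z.re / (s * Real.exp ((kf z : ℝ) * s)) := by
      simpa [hmf] using (Int.floor_le (z.re / (s * Real.exp ((kf z : ℝ) * s))))
    have h2 : z.re / (s * Real.exp ((kf z : ℝ) * s)) < (mf z : ℝ) + 1 := by
      simpa [hmf] using (Int.lt_floor_add_one (z.re / (s * Real.exp ((kf z : ℝ) * s))))
    constructor
    · calc (mf z : ℝ) * (s * Real.exp ((kf z : ℝ) * s))
          ≤ (z.re / (s * Real.exp ((kf z : ℝ) * s))) * (s * Real.exp ((kf z : ℝ) * s)) := by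
            nlinarith
        _ = z.re := by field_simp
    · have := (div_lt_iff₀ hw0).mp h2; linarith
  have hcol : (distGraph UpperHalfPlane d).Colorable (4 * M) := by
    have hcard : Fintype.card (ZMod 4 × ZMod M) = 4 * M := by
      rw [Fintype.card_prod, ZMod.card, ZMod.card]
    rw [← hcard]
    apply SimpleGraph.Coloring.colorable
    refine SimpleGraph.Coloring.mk
      (fun z => (((kf z : ℤ) : ZMod 4), ((mf z : ℤ) : ZMod M))) ?_
    rintro z w ⟨hzw, hdist⟩ hc
    have hck : ((kf z : ℤ) : ZMod 4) = ((kf w : ℤ) : ZMod 4) := congrArg Prod.fst hc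
    have hcm : ((mf z : ℤ) : ZMod M) = ((mf w : ℤ) : ZMod M) := congrArg Prod.snd hc
    set u : ℝ := Real.exp s with hu_def
    have hu0 : (0 : ℝ) < u := Real.exp_pos _
    have hu1 : 1 + s ≤ u := by
      have := Real.add_one_le_exp s; linarith
    have huu : u * u = Real.exp d := by
      rw [hu_def, ← Real.exp_add]; congr 1; rw [hs_def]; ring
    have hX1 : (1 : ℝ) < Real.exp d := by
      have := Real.add_one_le_exp d; linarith
    by_cases hkzw : kf z = kf w
    · -- same band
      set A : ℝ := Real.exp ((kf z : ℝ) * s) with hA_def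
      have hA : (0 : ℝ) < A := Real.exp_pos _
      obtain ⟨hbz1, hbz2⟩ := hband z
      obtain ⟨hbw1, hbw2⟩ := hband w
      rw [← hkzw] at hbw1 hbw2
      obtain ⟨hxz1, hxz2⟩ := hbox z
      obtain ⟨hxw1, hxw2⟩ := hbox w
      rw [← hkzw] at hxw1 hxw2
      have hcd : Real.cosh d = 1 + dist (z : ℂ) (w : ℂ) ^ 2 / (2 * z.im * w.im) := by
        rw [← hdist]; exact UpperHalfPlane.cosh_dist z w
      set D : ℝ := dist (z : ℂ) (w : ℂ) with hD_def
      have hab : (0 : ℝ) < 2 * z.im * w.im := by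
        have := z.im_pos; have := w.im_pos; positivity
      have hDsq : D ^ 2 = (Real.cosh d - 1) * (2 * z.im * w.im) := by
        field_simp at hcd; linarith
      have hcosh : Real.cosh d = (Real.exp d + (Real.exp d)⁻¹) / 2 := by
        rw [Real.cosh_eq, Real.exp_neg]
      have hDeq : D ^ 2 = (Real.exp d + (Real.exp d)⁻¹ - 2) * (z.im * w.im) := by
        rw [hDsq, hcosh]; ring
      have hXYinv : Real.exp d * (Real.exp d)⁻¹ = 1 := by
        field_simp
      by_cases hmzw : mf z = mf w
      · -- same box
        have hdx : (z.re - w.re) ^ 2 < (s * A) ^ 2 := by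
          rw [← hmzw] at hxw1 hxw2
          have h1 : z.re - w.re < s * A := by nlinarith
          have h2 : -(s * A) < z.re - w.re := by nlinarith
          nlinarith
        have hD2 : D ^ 2 = (z.re - w.re) ^ 2 + (z.im - w.im) ^ 2 := by
          rw [hD_def, Complex.dist_eq_re_im, Real.sq_sqrt (by positivity)]
          simp [UpperHalfPlane.coe_re, UpperHalfPlane.coe_im]
        have hYu : (Real.exp d)⁻¹ * (u * u) = 1 := by
          rw [huu]; field_simp
        have hDeq' : D ^ 2 = (u * u + (Real.exp d)⁻¹ - 2) * (z.im * w.im) := by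
          rw [huu]; exact hDeq
        exact auxSameBox d s u A z.im w.im (z.re - w.re) D (Real.exp d)⁻¹
          hd hs_def hu1 hA hbz1 hbz2 hbw1 hbw2 hdx hD2 hYu hDeq'
      · -- same band, different box
        have hdvd : (M : ℤ) ∣ mf w - mf z :=
          ((ZMod.intCast_eq_intCast_iff _ _ _).mp hcm).dvd
        have hne : mf w - mf z ≠ 0 := sub_ne_zero.mpr (Ne.symm hmzw)
        have hMle : (M : ℤ) ≤ |mf w - mf z| :=
          Int.le_of_dvd (abs_pos.mpr hne) ((dvd_abs _ _).mpr hdvd)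
        have hMleR : (M : ℝ) ≤ |(mf w : ℝ) - (mf z : ℝ)| := by
          have : ((M : ℤ) : ℝ) ≤ ((|mf w - mf z| : ℤ) : ℝ) := by exact_mod_cast hMle
          push_cast at this; convert this using 2 <;> push_cast <;> ring
        have hw0 : (0 : ℝ) < s * A := by positivity
        have hxgap : ((M : ℝ) - 1) * (s * A) < |z.re - w.re| := by
          rcases abs_cases ((mf w : ℝ) - (mf z : ℝ)) with ⟨he, _⟩ | ⟨he, _⟩ <;>
            rw [he] at hMleR <;> rcases abs_cases (z.re - w.re) with ⟨hf, _⟩ | ⟨hf, _⟩ <;>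
            rw [hf] <;> nlinarith
        have hDx : |z.re - w.re| ≤ D := by
          have h1 : |((z : ℂ) - (w : ℂ)).re| ≤ ‖(z : ℂ) - (w : ℂ)‖ :=
            Complex.abs_re_le_norm _
          rw [Complex.sub_re, UpperHalfPlane.coe_re, UpperHalfPlane.coe_re] at h1
          rwa [hD_def, Complex.dist_eq]
        have hDgt : 3 * Real.exp d * (d / 2 * A) < D := by
          have hgap3 : 3 * Real.exp d * (d / 2 * A) ≤ ((M : ℝ) - 1) * (s * A) := by
            have h1 : 3 * Real.exp d * (s * A) ≤ ((M : ℝ) - 1) * (s * A) :=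
              mul_le_mul_of_nonneg_right hM3 hw0.le
            calc 3 * Real.exp d * (d / 2 * A) = 3 * Real.exp d * (s * A) := by rw [hs_def]
              _ ≤ ((M : ℝ) - 1) * (s * A) := h1
          linarith [lt_of_lt_of_le hxgap hDx]
        have hY1 : 1 - d ≤ (Real.exp d)⁻¹ := by
          rw [← Real.exp_neg]; have := Real.add_one_le_exp (-d); linarith
        exact auxDiffBox d (Real.exp d) (Real.exp d)⁻¹ A u z.im w.im D
          hd huu.symm hu0 hXYinv hY1 hX1 hA z.im_pos w.im_pos hbz2 hbw2 hDeq hDgt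
    · -- different bands
      have hdvd : (4 : ℤ) ∣ kf w - kf z :=
        ((ZMod.intCast_eq_intCast_iff _ _ 4).mp hck).dvd
      have hne : kf w - kf z ≠ 0 := sub_ne_zero.mpr (Ne.symm hkzw)
      have h4 : (4 : ℤ) ≤ |kf w - kf z| :=
        Int.le_of_dvd (abs_pos.mpr hne) ((dvd_abs _ _).mpr hdvd)
      have h4R : (4 : ℝ) ≤ |(kf w : ℝ) - (kf z : ℝ)| := by
        have : ((4 : ℤ) : ℝ) ≤ ((|kf w - kf z| : ℤ) : ℝ) := by exact_mod_cast h4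
        push_cast at this; convert this using 2 <;> push_cast <;> ring
      have hld : |Real.log z.im - Real.log w.im| ≤ d := by
        have h := UpperHalfPlane.dist_log_im_le z w
        rw [Real.dist_eq, hdist] at h
        exact h
      obtain ⟨hlz1, hlz2⟩ := hlog z
      obtain ⟨hlw1, hlw2⟩ := hlog w
      obtain ⟨hp, hq⟩ := abs_le.mp hld
      rcases abs_cases ((kf w : ℝ) - (kf z : ℝ)) with ⟨he, _⟩ | ⟨he, _⟩ <;>
        rw [he] at h4R <;>
        linarith [mul_le_mul_of_nonneg_right h4R hs.le]
  -- conclude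
  have hfin : (distGraph UpperHalfPlane d).chromaticNumber ≤ ((4 * M : ℕ) : ℕ∞) :=
    hcol.chromaticNumber_le
  calc ((distGraph UpperHalfPlane d).chromaticNumber : ℝ≥0∞)
      ≤ (((4 * M : ℕ) : ℕ∞) : ℝ≥0∞) := ENat.toENNReal_le.mpr hfin
    _ = (((4 * M : ℕ) : ℝ≥0∞)) := ENat.toENNReal_coe _
    _ = ENNReal.ofReal ((4 * M : ℕ) : ℝ) := (ENNReal.ofReal_natCast _).symm
    _ ≤ ENNReal.ofReal (20 * Real.exp d) := by
        apply ENNReal.ofReal_le_ofReal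
        have hceil : ((⌈3 * Real.exp d⌉₊ : ℝ)) < 3 * Real.exp d + 1 :=
          Nat.ceil_lt_add_one (by positivity)
        have h1 : (1 : ℝ) ≤ Real.exp d := by
          have := Real.add_one_le_exp d; linarith
        rw [hM_def]
        push_cast
        linarith
end

section
/- For every real number d > 0, setting r = min(2d/5, arcsinh(1)), the d-chromatic number of the hyperbolic plane satisfies χ(ℍ, d) ≤ sinh(5r/2) · sinh(d) / sinh²(r/4) + 1. -/
open scoped ENNReal

private lemma sinh_nat_mul_ge (n : ℕ) {x : ℝ} (hx : 0 ≤ x) :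
    (n : ℝ) * Real.sinh x ≤ Real.sinh (n * x) := by
  induction n with
  | zero => simp
  | succ n ih =>
    have h1 : Real.sinh (((n:ℕ)+1 : ℝ) * x)
        = Real.sinh ((n:ℝ) * x) * Real.cosh x + Real.cosh ((n:ℝ)*x) * Real.sinh x := by
      rw [add_mul, one_mul, Real.sinh_add]
    have hc := Real.one_le_cosh x
    have hc2 := Real.one_le_cosh ((n:ℝ)*x)
    have hs : 0 ≤ Real.sinh ((n:ℝ)*x) := Real.sinh_nonneg_iff.2 (by positivity)
    have hsx : 0 ≤ Real.sinh x := Real.sinh_nonneg_iff.2 hx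
    push_cast
    rw [h1] at *
    nlinarith

private lemma key_sq {u : ℝ} (hu : 0 < u) :
    u ^ 2 + (Real.exp u - 1) ^ 2 < (2 * Real.sinh u) ^ 2 := by
  have h1 : u / 2 ≤ Real.sinh (u / 2) := Real.self_le_sinh_iff.2 (by linarith)
  have e1 : Real.sinh u = (Real.exp u - Real.exp (-u)) / 2 := Real.sinh_eq u
  have e2 : Real.sinh (u/2) = (Real.exp (u/2) - Real.exp (-(u/2))) / 2 := Real.sinh_eq _
  have hB : Real.exp (u/2) * Real.exp (u/2) = Real.exp u := by
    rw [← Real.exp_add]; ring_nf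
  have hC : Real.exp (-(u/2)) * Real.exp (-(u/2)) = Real.exp (-u) := by
    rw [← Real.exp_add]; ring_nf
  have hD : Real.exp u * Real.exp (-u) = 1 := by rw [← Real.exp_add]; simp
  have hpos1 : 0 < Real.exp u - 1 := by
    nlinarith [Real.add_one_le_exp u]
  have hpos2 : 0 < 1 - Real.exp (-u) * Real.exp (-u) := by
    have h := Real.exp_lt_one_iff.2 (by linarith : -u < 0)
    have h0 := Real.exp_pos (-u)
    nlinarith
  have hmain : u ^ 2 < 2 * Real.exp u + Real.exp (-u) * Real.exp (-u) - 3 := by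
    have hPQ : Real.exp (u/2) * Real.exp (-(u/2)) = 1 := by rw [← Real.exp_add]; simp
    have hu2 : u ≤ Real.exp (u/2) - Real.exp (-(u/2)) := by rw [e2] at h1; linarith
    have hAB : u ^ 2 ≤ Real.exp u + Real.exp (-u) - 2 := by
      nlinarith [mul_self_le_mul_self hu.le hu2]
    nlinarith [mul_pos hpos1 hpos2]
  nlinarith [Real.exp_pos (-u)]


set_option maxHeartbeats 4000000 in
/-- For every `d > 0`, with `r = min (2d/5) (arcsinh 1)`, the `d`-chromatic number of the
hyperbolic plane is at most `sinh(5r/2) * sinh(d) / sinh²(r/4) + 1`. -/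
theorem upperHalfPlane_chromatic_le (d : ℝ) (hd : 0 < d) (r : ℝ)
    (hr : r = min (2 * d / 5) (Real.arsinh 1)) :
    ((distGraph UpperHalfPlane d).chromaticNumber : ℝ≥0∞) ≤
      ENNReal.ofReal (Real.sinh (5 * r / 2) * Real.sinh d / (Real.sinh (r / 4)) ^ 2 + 1) := by
  have hu : 0 < d / 2 := by linarith
  set u : ℝ := d / 2 with hu_def
  set N : ℕ := ⌊(Real.exp (2*u) - 1) / u⌋₊ + 2 with hN_def
  haveI : NeZero N := ⟨by omega⟩
  set kk : UpperHalfPlane → ℤ := fun z => ⌊Real.log z.im / u⌋ with hkk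
  set sw : ℤ → ℝ := fun k => u * Real.exp (k * u) with hsw
  have hsw_pos : ∀ k, 0 < sw k := fun k => by positivity
  set jj : UpperHalfPlane → ℤ := fun z => ⌊z.re / sw (kk z)⌋ with hjj
  -- box facts
  have hlog : ∀ z : UpperHalfPlane, (kk z : ℝ) * u ≤ Real.log z.im ∧
      Real.log z.im < ((kk z : ℝ) + 1) * u := by
    intro z
    have h0 : (kk z : ℝ) ≤ Real.log z.im / u := Int.floor_le _
    have h1 : Real.log z.im / u < (kk z : ℝ) + 1 := Int.lt_floor_add_one _
    constructor
    · calc (kk z : ℝ) * u ≤ (Real.log z.im / u) * u := by nlinarith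
        _ = Real.log z.im := div_mul_cancel₀ _ hu.ne'
    · calc Real.log z.im = (Real.log z.im / u) * u := (div_mul_cancel₀ _ hu.ne').symm
        _ < ((kk z : ℝ) + 1) * u := by nlinarith
  have him : ∀ z : UpperHalfPlane, Real.exp ((kk z : ℝ) * u) ≤ z.im ∧
      z.im < Real.exp ((kk z : ℝ) * u) * Real.exp u := by
    intro z
    have h2 := (hlog z).1
    have h3 := (hlog z).2
    have h4 : Real.exp (Real.log z.im) = z.im := Real.exp_log z.im_pos
    refine ⟨?_, ?_⟩
    · calc Real.exp ((kk z : ℝ) * u) ≤ Real.exp (Real.log z.im) := Real.exp_le_exp.2 h2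
        _ = z.im := h4
    · calc z.im = Real.exp (Real.log z.im) := h4.symm
        _ < Real.exp (((kk z : ℝ) + 1) * u) := Real.exp_lt_exp.2 h3
        _ = Real.exp ((kk z : ℝ) * u) * Real.exp u := by rw [← Real.exp_add]; ring_nf
  have hre : ∀ z : UpperHalfPlane, (jj z : ℝ) * sw (kk z) ≤ z.re ∧
      z.re < ((jj z : ℝ) + 1) * sw (kk z) := by
    intro z
    have hs := hsw_pos (kk z)
    have h0 : (jj z : ℝ) ≤ z.re / sw (kk z) := Int.floor_le _
    have h1 : z.re / sw (kk z) < (jj z : ℝ) + 1 := Int.lt_floor_add_one _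
    constructor
    · calc (jj z : ℝ) * sw (kk z) ≤ (z.re / sw (kk z)) * sw (kk z) := by nlinarith
        _ = z.re := div_mul_cancel₀ _ hs.ne'
    · calc z.re = (z.re / sw (kk z)) * sw (kk z) := (div_mul_cancel₀ _ hs.ne').symm
        _ < ((jj z : ℝ) + 1) * sw (kk z) := by nlinarith
  have hd_arsinh : d = 2 * Real.arsinh (Real.sinh u) := by
    rw [Real.arsinh_sinh, hu_def]; ring
  have hsinhu : 0 < Real.sinh u := Real.sinh_pos_iff.2 hu
  -- validity of the coloring
  have hvalid : ∀ z w : UpperHalfPlane, (distGraph UpperHalfPlane d).Adj z w →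
      (((kk z : ZMod 4), (jj z : ZMod N)) : ZMod 4 × ZMod N)
        ≠ ((kk w : ZMod 4), (jj w : ZMod N)) := by
    rintro z w ⟨hne, hdist⟩ heq
    have hk4 : ((kk z : ZMod 4)) = ((kk w : ZMod 4)) := congrArg Prod.fst heq
    have hjN : ((jj z : ZMod N)) = ((jj w : ZMod N)) := congrArg Prod.snd heq
    by_cases hk : kk z = kk w
    · -- same strip: use the explicit distance formula
      have hQ : dist (z : ℂ) (w : ℂ) = Real.sinh u * (2 * Real.sqrt (z.im * w.im)) := by
        have h1 := UpperHalfPlane.dist_eq z w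
        rw [hdist, hd_arsinh] at h1
        have h2 : Real.arsinh (dist (z : ℂ) (w : ℂ) / (2 * Real.sqrt (z.im * w.im)))
            = Real.arsinh (Real.sinh u) := by linarith
        have h3 := Real.arsinh_injective h2
        have hP : (0:ℝ) < 2 * Real.sqrt (z.im * w.im) := by
          have := Real.sqrt_pos.2 (mul_pos z.im_pos w.im_pos); linarith
        exact (div_eq_iff hP.ne').1 h3
      have hsqP : (0:ℝ) < Real.sqrt (z.im * w.im) :=
        Real.sqrt_pos.2 (mul_pos z.im_pos w.im_pos)
      set E : ℝ := Real.exp ((kk z : ℝ) * u) with hE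
      have hE0 : 0 < E := Real.exp_pos _
      have him1 := him z
      have him2 := him w
      rw [← hk] at him2
      -- sqrt bounds
      have hsqrt_lb : E ≤ Real.sqrt (z.im * w.im) := by
        have h5 : E * E ≤ z.im * w.im := by nlinarith [him1.1, him2.1]
        calc E = Real.sqrt (E * E) := (Real.sqrt_mul_self hE0.le).symm
          _ ≤ Real.sqrt (z.im * w.im) := Real.sqrt_le_sqrt h5
      have hsqrt_ub : Real.sqrt (z.im * w.im) < E * Real.exp u := by
        have h5 : z.im * w.im < (E * Real.exp u) * (E * Real.exp u) := by
          nlinarith [him1.2, him2.2, z.im_pos, w.im_pos]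
        calc Real.sqrt (z.im * w.im) < Real.sqrt ((E * Real.exp u) * (E * Real.exp u)) := by
              apply Real.sqrt_lt_sqrt (by positivity) h5
          _ = E * Real.exp u := Real.sqrt_mul_self (by positivity)
      have hre1 := hre z
      have hre2 := hre w
      rw [← hk] at hre2
      have hDre : |z.re - w.re| ≤ dist (z : ℂ) (w : ℂ) := by
        have h6 : ((z : ℂ) - (w : ℂ)).re = z.re - w.re := by
          simp [Complex.sub_re]
        calc |z.re - w.re| = |((z : ℂ) - (w : ℂ)).re| := by rw [h6]
          _ ≤ ‖(z : ℂ) - (w : ℂ)‖ := Complex.abs_re_le_norm _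
          _ = dist (z : ℂ) (w : ℂ) := (Complex.dist_eq _ _).symm
      by_cases hj : jj z = jj w
      · -- same box: the hyperbolic distance would be < d
        rw [← hj] at hre2
        have hΔre : |z.re - w.re| < sw (kk z) := by
          rw [abs_lt]
          constructor <;> [linarith [hre1.1, hre2.2]; linarith [hre1.2, hre2.1]]
        have hΔim : |z.im - w.im| < E * (Real.exp u - 1) := by
          rw [abs_lt]
          constructor <;>
            [nlinarith [him1.1, him2.2]; nlinarith [him1.2, him2.1]]
        have hDc2 : dist (z : ℂ) (w : ℂ) ^ 2 = (z.re - w.re) ^ 2 + (z.im - w.im) ^ 2 := by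
          rw [Complex.dist_eq_re_im]
          rw [Real.sq_sqrt (by positivity)]
          simp [Complex.sub_re, Complex.sub_im]
        have hsw_eq : sw (kk z) = u * E := rfl
        have hkey := key_sq hu
        have hDc_lt : dist (z : ℂ) (w : ℂ) ^ 2 < (2 * Real.sinh u * E) ^ 2 := by
          rw [hDc2]
          have h7 : (z.re - w.re) ^ 2 < (u * E) ^ 2 := by
            rw [← hsw_eq]
            have := abs_nonneg (z.re - w.re)
            nlinarith [hΔre]
          have h8 : (z.im - w.im) ^ 2 < (E * (Real.exp u - 1)) ^ 2 := by
            have := abs_nonneg (z.im - w.im)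
            have h9 : 0 < Real.exp u - 1 := by nlinarith [Real.add_one_le_exp u]
            nlinarith [hΔim]
          nlinarith [sq_nonneg E, hE0]
        -- but equality says dist = sinh u * 2 * sqrt ≥ sinh u * 2 * E
        have hge : 2 * Real.sinh u * E ≤ dist (z : ℂ) (w : ℂ) := by
          rw [hQ]; nlinarith [hsqrt_lb, hsinhu]
        have hsq : (2 * Real.sinh u * E) ^ 2 ≤ dist (z : ℂ) (w : ℂ) ^ 2 :=
          pow_le_pow_left₀ (by positivity) hge 2
        linarith
      · -- same strip, different column: hyperbolic distance would be > d
        have hdvd : (N : ℤ) ∣ jj w - jj z :=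
          Int.ModEq.dvd ((ZMod.intCast_eq_intCast_iff _ _ _).1 hjN)
        have habs : (N : ℤ) ≤ |jj z - jj w| := by
          have h10 : jj z - jj w ≠ 0 := sub_ne_zero.2 hj
          have := Int.le_of_dvd (abs_pos.2 h10) ((dvd_abs _ _).2 (dvd_sub_comm.1 hdvd))
          simpa using this
        have hgap : ((N : ℝ) - 1) * sw (kk z) < |z.re - w.re| := by
          have hsk := hsw_pos (kk z)
          rcases abs_cases ((jj z : ℤ) - jj w) with ⟨he, hnn⟩ | ⟨he, hnp⟩
          · -- jj z ≥ jj w + N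
            have h11 : (jj w : ℝ) + N ≤ (jj z : ℝ) := by
              have hz : (N : ℤ) ≤ jj z - jj w := by omega
              have h' : (N:ℝ) ≤ (jj z : ℝ) - (jj w : ℝ) := by exact_mod_cast hz
              linarith
            have h12 : z.re - w.re > ((N : ℝ) - 1) * sw (kk z) := by
              nlinarith [hre1.1, hre2.2]
            calc ((N : ℝ) - 1) * sw (kk z) < z.re - w.re := h12
              _ ≤ |z.re - w.re| := le_abs_self _
          · -- jj w ≥ jj z + N
            have h11 : (jj z : ℝ) + N ≤ (jj w : ℝ) := by
              have hz : (N : ℤ) ≤ jj w - jj z := by omega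
              have h' : (N:ℝ) ≤ (jj w : ℝ) - (jj z : ℝ) := by exact_mod_cast hz
              linarith
            have h12 : w.re - z.re > ((N : ℝ) - 1) * sw (kk z) := by
              nlinarith [hre2.1, hre1.2]
            calc ((N : ℝ) - 1) * sw (kk z) < w.re - z.re := h12
              _ ≤ |z.re - w.re| := by rw [abs_sub_comm]; exact le_abs_self _
        -- combine
        have hfloor : ((N : ℝ) - 1) ≥ (Real.exp (2*u) - 1) / u := by
          have := Nat.lt_floor_add_one ((Real.exp (2*u) - 1) / u)
          have hcast : (N : ℝ) = (⌊(Real.exp (2*u) - 1) / u⌋₊ : ℝ) + 2 := by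
            rw [hN_def]; push_cast; ring
          linarith
        have hexp2u : Real.exp (2*u) = Real.exp u * Real.exp u := by
          rw [← Real.exp_add]; ring_nf
        have hsinh_eq : 2 * Real.sinh u * Real.exp u = Real.exp (2*u) - 1 := by
          rw [Real.sinh_eq, hexp2u]
          have : Real.exp (-u) * Real.exp u = 1 := by rw [← Real.exp_add]; simp
          nlinarith [this]
        have hsw_eq : sw (kk z) = u * E := rfl
        -- (N-1) * u * E < dist ≤... dist = sinh u * 2 * sqrt < sinh u * 2 * E e^u
        have hlt : ((N:ℝ) - 1) * (u * E) < Real.sinh u * (2 * (E * Real.exp u)) := by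
          calc ((N:ℝ) - 1) * (u * E) = ((N:ℝ) - 1) * sw (kk z) := by rw [hsw_eq]
            _ < |z.re - w.re| := hgap
            _ ≤ dist (z : ℂ) (w : ℂ) := hDre
            _ = Real.sinh u * (2 * Real.sqrt (z.im * w.im)) := hQ
            _ ≤ Real.sinh u * (2 * (E * Real.exp u)) := by nlinarith [hsqrt_ub, hsinhu]
        have hcontr : ((N:ℝ) - 1) * u < Real.exp (2*u) - 1 := by
          rw [← hsinh_eq]
          have := Real.exp_pos u
          nlinarith [hlt, hE0]
        have : (Real.exp (2*u) - 1) / u * u ≤ ((N:ℝ)-1) * u := by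
          have h13 : (Real.exp (2*u) - 1) / u * u = Real.exp (2*u) - 1 := div_mul_cancel₀ _ hu.ne'
          nlinarith [hfloor]
        have h13 : (Real.exp (2*u) - 1) / u * u = Real.exp (2*u) - 1 := div_mul_cancel₀ _ hu.ne'
        linarith
    · -- different strips: hyperbolic distance would be > d
      have hdvd : (4 : ℤ) ∣ kk w - kk z := by
        have := (ZMod.intCast_eq_intCast_iff (kk z) (kk w) 4).1 hk4
        exact_mod_cast Int.ModEq.dvd this
      have habs : (4 : ℤ) ≤ |kk z - kk w| := by
        have h10 : kk z - kk w ≠ 0 := sub_ne_zero.2 hk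
        have := Int.le_of_dvd (abs_pos.2 h10) ((dvd_abs _ _).2 (dvd_sub_comm.1 hdvd))
        simpa using this
      have hlog1 := hlog z
      have hlog2 := hlog w
      have hgap : 3 * u < |Real.log z.im - Real.log w.im| := by
        rcases abs_cases ((kk z : ℤ) - kk w) with ⟨he, hnn⟩ | ⟨he, hnp⟩
        · have h11 : (kk w : ℝ) + 4 ≤ (kk z : ℝ) := by
            have : (4 : ℤ) ≤ kk z - kk w := by omega
            have h' : (4:ℝ) ≤ (kk z : ℝ) - (kk w : ℝ) := by exact_mod_cast this
            linarith
          have h12 : Real.log z.im - Real.log w.im > 3 * u := by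
            nlinarith [hlog1.1, hlog2.2]
          calc 3 * u < Real.log z.im - Real.log w.im := h12
            _ ≤ |Real.log z.im - Real.log w.im| := le_abs_self _
        · have h11 : (kk z : ℝ) + 4 ≤ (kk w : ℝ) := by
            have : (4 : ℤ) ≤ kk w - kk z := by omega
            have h' : (4:ℝ) ≤ (kk w : ℝ) - (kk z : ℝ) := by exact_mod_cast this
            linarith
          have h12 : Real.log w.im - Real.log z.im > 3 * u := by
            nlinarith [hlog2.1, hlog1.2]
          calc 3 * u < Real.log w.im - Real.log z.im := h12
            _ ≤ |Real.log z.im - Real.log w.im| := by rw [abs_sub_comm]; exact le_abs_self _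
      have hle := UpperHalfPlane.dist_log_im_le z w
      rw [Real.dist_eq, hdist] at hle
      have : d = 2 * u := by rw [hu_def]; ring
      linarith
  -- build the coloring
  let C : (distGraph UpperHalfPlane d).Coloring (ZMod 4 × ZMod N) :=
    SimpleGraph.Coloring.mk (fun z => ((kk z : ZMod 4), (jj z : ZMod N)))
      (fun {z w} h => hvalid z w h)
  have hcard : Fintype.card (ZMod 4 × ZMod N) = 4 * N := by
    rw [Fintype.card_prod, ZMod.card, ZMod.card]
  have hcol : (distGraph UpperHalfPlane d).Colorable (4 * N) := hcard ▸ C.colorable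
  have hchr := hcol.chromaticNumber_le
  -- final arithmetic
  set A : ℝ := Real.arsinh 1 with hA_def
  have hA1 : Real.sinh A = 1 := Real.sinh_arsinh 1
  have hA0 : 0 < A := by
    by_contra h
    push_neg at h
    have : Real.sinh A ≤ 0 := Real.sinh_nonpos_iff.2 h
    linarith
  have hr0 : 0 < r := by
    rw [hr]; exact lt_min (by linarith) hA0
  have hr25 : 5 * r / 2 ≤ d := by
    have := min_le_left (2 * d / 5) A
    rw [← hr] at this; linarith
  have hrA : r ≤ A := by
    have := min_le_right (2 * d / 5) A
    rw [← hr] at this; linarith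
  have hs4 : 0 < Real.sinh (r/4) := Real.sinh_pos_iff.2 (by linarith)
  have hsd : 0 < Real.sinh d := Real.sinh_pos_iff.2 hd
  have hs52 : 0 < Real.sinh (5*r/2) := Real.sinh_pos_iff.2 (by linarith)
  -- superadditivity facts
  have h_a : 10 * Real.sinh (r/4) ≤ Real.sinh (5*r/2) := by
    have h := sinh_nat_mul_ge 10 (show (0:ℝ) ≤ r/4 by linarith)
    have h1 : ((10:ℕ):ℝ) * (r/4) = 5*r/2 := by push_cast; ring
    rw [h1] at h
    push_cast at h
    linarith
  have h_b : 10 * Real.sinh (r/4) ≤ Real.sinh d := by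
    have h := sinh_nat_mul_ge 10 (show (0:ℝ) ≤ d/10 by linarith)
    have h1 : ((10:ℕ):ℝ) * (d/10) = d := by push_cast; ring
    rw [h1] at h
    push_cast at h
    have h2 : Real.sinh (r/4) ≤ Real.sinh (d/10) := Real.sinh_le_sinh.2 (by linarith)
    linarith
  have h_c : Real.sinh (r/4) ≤ 1/4 := by
    have h := sinh_nat_mul_ge 4 (show (0:ℝ) ≤ A/4 by linarith)
    have h1 : ((4:ℕ):ℝ) * (A/4) = A := by push_cast; ring
    rw [h1, hA1] at h
    push_cast at h
    have h2 : Real.sinh (r/4) ≤ Real.sinh (A/4) := Real.sinh_le_sinh.2 (by linarith)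
    linarith
  set S : ℝ := Real.sinh (5 * r / 2) * Real.sinh d / (Real.sinh (r / 4)) ^ 2 with hS_def
  have h100 : 100 ≤ S := by
    rw [hS_def, le_div_iff₀ (by positivity)]
    nlinarith [h_a, h_b, hs4]
  have h40 : 40 * Real.sinh d ≤ S := by
    rw [hS_def, le_div_iff₀ (by positivity)]
    have e1 : 10 * Real.sinh (r/4) * Real.sinh d ≤ Real.sinh (5*r/2) * Real.sinh d :=
      mul_le_mul_of_nonneg_right h_a hsd.le
    nlinarith [mul_nonneg (sub_nonneg.2 h_c) (mul_nonneg hs4.le hsd.le)]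
  -- bound on N
  have hx0 : 0 ≤ (Real.exp (2*u) - 1) / u := by
    have : (1:ℝ) ≤ Real.exp (2*u) := Real.one_le_exp (by linarith)
    exact div_nonneg (by linarith) hu.le
  have hNle : (N : ℝ) ≤ (Real.exp (2*u) - 1) / u + 2 := by
    rw [hN_def]
    push_cast
    have := Nat.floor_le hx0
    linarith
  have hdu : d = 2 * u := by rw [hu_def]; ring
  have hsinhd : Real.sinh d = (Real.exp (2*u) - Real.exp (-(2*u))) / 2 := by
    rw [hdu, Real.sinh_eq]
  have hfinal : (4 * N : ℝ) ≤ S + 1 := by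
    rcases le_or_gt u 1 with hcase | hcase
    · -- small u : N is bounded by a constant
      have hconv := convexOn_exp.2 (Set.mem_univ (2:ℝ)) (Set.mem_univ (0:ℝ))
        (le_of_lt hu) (by linarith : (0:ℝ) ≤ 1 - u) (by ring)
      simp only [smul_eq_mul, mul_zero, add_zero, Real.exp_zero, mul_one] at hconv
      have he2 : Real.exp 2 = Real.exp 1 * Real.exp 1 := by
        rw [← Real.exp_add]; norm_num
      have he1 : Real.exp 1 < 2.7182818286 := Real.exp_one_lt_d9
      have he1' : 0 < Real.exp 1 := Real.exp_pos 1
      rw [mul_comm u 2] at hconv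
      have hxle : (Real.exp (2*u) - 1) / u ≤ Real.exp 2 - 1 := by
        rw [div_le_iff₀ hu]
        nlinarith [hconv]
      have : (4 * N : ℝ) ≤ 4 * (Real.exp 2 + 1) := by linarith [hNle, hxle]
      have he2lt : Real.exp 2 < 7.39 := by nlinarith
      linarith [h100]
    · -- large u
      have hxle : (Real.exp (2*u) - 1) / u ≤ Real.exp (2*u) - 1 := by
        apply div_le_self _ (by linarith)
        have : (1:ℝ) ≤ Real.exp (2*u) := Real.one_le_exp (by linarith)
        linarith
      have h4N : (4 * N : ℝ) ≤ 4 * Real.exp (2*u) + 4 := by nlinarith [hNle]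
      have hexp_lb : (4:ℝ) ≤ Real.exp (2*u) := by
        have h1 : Real.exp (2*u) = Real.exp u * Real.exp u := by
          rw [← Real.exp_add]; ring_nf
        have h2 : (2:ℝ) ≤ Real.exp u := by nlinarith [Real.add_one_le_exp u]
        nlinarith [Real.exp_pos u]
      have hexp_ub : Real.exp (-(2*u)) ≤ 1 := Real.exp_le_one_iff.2 (by linarith)
      have : (4 * N : ℝ) ≤ 40 * Real.sinh d + 1 := by
        rw [hsinhd]
        nlinarith [h4N, hexp_lb, hexp_ub, Real.exp_pos (-(2*u))]
      linarith [h40]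
  -- cast to ℝ≥0∞
  calc ((distGraph UpperHalfPlane d).chromaticNumber : ℝ≥0∞)
      ≤ ((4 * N : ℕ) : ℝ≥0∞) := by exact_mod_cast hchr
    _ = ENNReal.ofReal ((4 * N : ℕ) : ℝ) := (ENNReal.ofReal_natCast _).symm
    _ ≤ ENNReal.ofReal (S + 1) := ENNReal.ofReal_le_ofReal (by exact_mod_cast hfinal)
end

section
/- Let d > 0 and r > 0 be real numbers with 5r ≤ 2d, let x be a point of the hyperbolic plane ℍ, and let Y ⊆ ℍ be a set of points such that any two distinct points of Y are at distance greater than r, and every y ∈ Y satisfies d − 2r ≤ dist(x, y) ≤ d + 2r. Then Y is finite and its cardinality is at most sinh(5r/2) · sinh(d) / sinh²(r/4). -/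
open Real MeasureTheory Set Metric
open scoped ENNReal

lemma key_integral {c R : ℝ} (hR : 0 < R) (hcR : R < c) :
    ∫ y in (c - R)..(c + R), 2 * Real.sqrt (R ^ 2 - (y - c) ^ 2) / y ^ 2
      = 2 * π * (c / Real.sqrt (c ^ 2 - R ^ 2) - 1) := by
  have hc : 0 < c := hR.trans hcR
  set s : ℝ := Real.sqrt (c ^ 2 - R ^ 2) with hs_def
  have hsub : 0 < c ^ 2 - R ^ 2 := by nlinarith
  have hs : 0 < s := Real.sqrt_pos.2 hsub
  have hs2 : s ^ 2 = c ^ 2 - R ^ 2 := Real.sq_sqrt hsub.le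
  set F : ℝ → ℝ := fun y =>
    -2 * Real.sqrt (R ^ 2 - (y - c) ^ 2) / y - 2 * Real.arcsin ((y - c) / R)
      + (2 * c / s) * Real.arcsin ((R ^ 2 + c * (y - c)) / (R * y)) with hF_def
  have hab : c - R ≤ c + R := by linarith
  -- continuity of F on Icc
  have hy0' : ∀ y ∈ Icc (c - R) (c + R), y ≠ 0 := fun y hy =>
    ne_of_gt (lt_of_lt_of_le (by linarith : (0:ℝ) < c - R) hy.1)
  have hcont : ContinuousOn F (Icc (c - R) (c + R)) := by
    apply ContinuousOn.add
    · apply ContinuousOn.sub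
      · exact ContinuousOn.div (by fun_prop) continuousOn_id hy0'
      · apply Continuous.continuousOn
        have : Continuous fun y : ℝ => Real.arcsin ((y - c) / R) :=
          Real.continuous_arcsin.comp (by fun_prop)
        fun_prop
    · apply ContinuousOn.mul continuousOn_const
      apply Real.continuous_arcsin.comp_continuousOn
      exact ContinuousOn.div (by fun_prop) (by fun_prop)
        (fun y hy => mul_ne_zero (ne_of_gt hR) (hy0' y hy))
  -- derivative on Ioo
  have hderiv : ∀ y ∈ Ioo (c - R) (c + R),
      HasDerivAt F (2 * Real.sqrt (R ^ 2 - (y - c) ^ 2) / y ^ 2) y := by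
    intro y hy
    obtain ⟨hy1, hy2⟩ := hy
    have hc : 0 < c := hR.trans hcR
    have hy0 : 0 < y := by linarith
    have hQpos : 0 < R ^ 2 - (y - c) ^ 2 := by nlinarith
    have hsq : 0 < Real.sqrt (R ^ 2 - (y - c) ^ 2) := Real.sqrt_pos.2 hQpos
    have hsq2 : Real.sqrt (R ^ 2 - (y - c) ^ 2) ^ 2 = R ^ 2 - (y - c) ^ 2 :=
      Real.sq_sqrt hQpos.le
    set q : ℝ := Real.sqrt (R ^ 2 - (y - c) ^ 2) with hq_def
    -- derivative of Q
    have hQ' : HasDerivAt (fun y : ℝ => R ^ 2 - (y - c) ^ 2) (-(2 * (y - c))) y := by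
      have h := (((hasDerivAt_id y).sub_const c).pow 2).const_sub (R ^ 2)
      simpa using h
    have hsqrt' : HasDerivAt (fun y : ℝ => Real.sqrt (R ^ 2 - (y - c) ^ 2))
        (1 / (2 * q) * (-(2 * (y - c)))) y :=
      (Real.hasDerivAt_sqrt (ne_of_gt hQpos)).comp y hQ'
    -- term 1
    have h1 : HasDerivAt (fun y : ℝ => -2 * Real.sqrt (R ^ 2 - (y - c) ^ 2) / y)
        (((-2 * (1 / (2 * q) * (-(2 * (y - c))))) * y - (-2 * q) * 1) / y ^ 2) y :=
      (hsqrt'.const_mul (-2)).div (hasDerivAt_id y) (ne_of_gt hy0)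
    -- term 2
    have hu : HasDerivAt (fun y : ℝ => (y - c) / R) (1 / R) y := by
      have := ((hasDerivAt_id y).sub_const c).div_const R
      simpa using this
    have hune1 : (y - c) / R ≠ -1 := by
      intro h; rw [div_eq_iff (ne_of_gt hR)] at h; nlinarith
    have hune2 : (y - c) / R ≠ 1 := by
      intro h; rw [div_eq_iff (ne_of_gt hR)] at h; nlinarith
    have h2 : HasDerivAt (fun y : ℝ => Real.arcsin ((y - c) / R))
        (1 / Real.sqrt (1 - ((y - c) / R) ^ 2) * (1 / R)) y :=
      by have h := (Real.hasDerivAt_arcsin hune1 hune2).comp y hu; exact h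
    -- term 3
    have hden : R * y ≠ 0 := by positivity
    have hφ : HasDerivAt (fun y : ℝ => (R ^ 2 + c * (y - c)) / (R * y))
        ((c * (R * y) - (R ^ 2 + c * (y - c)) * R) / (R * y) ^ 2) y := by
      have hnum : HasDerivAt (fun y : ℝ => R ^ 2 + c * (y - c)) c y := by
        have := (((hasDerivAt_id y).sub_const c).const_mul c).const_add (R ^ 2)
        simpa using this
      have hd : HasDerivAt (fun y : ℝ => R * y) R y := by
        simpa using (hasDerivAt_id y).const_mul R
      exact hnum.div hd hden
    have hkey : (R * y) ^ 2 - (R ^ 2 + c * (y - c)) ^ 2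
        = (c ^ 2 - R ^ 2) * (R ^ 2 - (y - c) ^ 2) := by ring
    have hφ2 : ((R ^ 2 + c * (y - c)) / (R * y)) ^ 2 < 1 := by
      rw [div_pow, div_lt_one (by positivity)]
      nlinarith [hkey, mul_pos (show (0:ℝ) < c ^ 2 - R ^ 2 by nlinarith) hQpos]
    have hφne1 : (R ^ 2 + c * (y - c)) / (R * y) ≠ -1 := by
      intro h; rw [h] at hφ2; norm_num at hφ2
    have hφne2 : (R ^ 2 + c * (y - c)) / (R * y) ≠ 1 := by
      intro h; rw [h] at hφ2; norm_num at hφ2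
    have h3 : HasDerivAt (fun y : ℝ => Real.arcsin ((R ^ 2 + c * (y - c)) / (R * y)))
        (1 / Real.sqrt (1 - ((R ^ 2 + c * (y - c)) / (R * y)) ^ 2)
          * ((c * (R * y) - (R ^ 2 + c * (y - c)) * R) / (R * y) ^ 2)) y :=
      by have h := (Real.hasDerivAt_arcsin hφne1 hφne2).comp y hφ; exact h
    -- square roots simplification
    have hsqrt_u : Real.sqrt (1 - ((y - c) / R) ^ 2) = q / R := by
      rw [show 1 - ((y - c) / R) ^ 2 = (q / R) ^ 2 by
        rw [eq_comm, div_pow, hsq2]; field_simp]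
      exact Real.sqrt_sq (by positivity)
    have hsqrt_φ : Real.sqrt (1 - ((R ^ 2 + c * (y - c)) / (R * y)) ^ 2)
        = s * q / (R * y) := by
      rw [show 1 - ((R ^ 2 + c * (y - c)) / (R * y)) ^ 2 = (s * q / (R * y)) ^ 2 by
        rw [eq_comm, div_pow, mul_pow, hsq2, hs2]
        field_simp
        ring]
      exact Real.sqrt_sq (by positivity)
    have htotal := (h1.sub (h2.const_mul 2)).add (h3.const_mul (2 * c / s))
    refine htotal.congr_deriv ?_
    rw [hsqrt_u, hsqrt_φ,
      show c * (R * y) - (R ^ 2 + c * (y - c)) * R = R * s ^ 2 from by rw [hs2]; ring]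
    have hs' : s ≠ 0 := ne_of_gt hs
    have hq' : q ≠ 0 := ne_of_gt hsq
    field_simp
    ring
  have hint : IntervalIntegrable (fun y => 2 * Real.sqrt (R ^ 2 - (y - c) ^ 2) / y ^ 2)
      volume (c - R) (c + R) := by
    apply ContinuousOn.intervalIntegrable
    rw [Set.uIcc_of_le hab]
    exact ContinuousOn.div (by fun_prop) (by fun_prop)
      (fun y hy => pow_ne_zero _ (hy0' y hy))
  have := intervalIntegral.integral_eq_sub_of_hasDeriv_right_of_le hab hcont
    (fun y hy => (hderiv y hy).hasDerivWithinAt) hint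
  rw [this]
  have hQ1 : R ^ 2 - (c + R - c) ^ 2 = 0 := by ring
  have hQ2 : R ^ 2 - (c - R - c) ^ 2 = 0 := by ring
  have e1 : (c + R - c) / R = 1 := by field_simp; ring
  have e2 : (c - R - c) / R = -1 := by field_simp; ring
  have e3 : (R ^ 2 + c * (c + R - c)) / (R * (c + R)) = 1 := by
    rw [div_eq_one_iff_eq (by positivity)]; ring
  have e4 : (R ^ 2 + c * (c - R - c)) / (R * (c - R)) = -1 := by
    rw [div_eq_iff (by nlinarith : R * (c - R) ≠ 0)]; ring
  simp only [hF_def, hQ1, hQ2, e1, e2, e3, e4, Real.sqrt_zero, Real.arcsin_one,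
    Real.arcsin_neg_one]
  field_simp
  ring


noncomputable def hypMeasure : Measure ℂ :=
  (volume : Measure ℂ).withDensity fun z => ENNReal.ofReal (z.im ^ 2)⁻¹

lemma hypMeasure_ball {w : ℂ} {R : ℝ} (hR : 0 ≤ R) (hRc : R < w.im) :
    hypMeasure (Metric.ball w R)
      = ENNReal.ofReal (2 * π * (w.im / Real.sqrt (w.im ^ 2 - R ^ 2) - 1)) := by
  rcases eq_or_lt_of_le hR with h0 | hR
  · have hb : 0 < w.im := h0 ▸ hRc
    rw [← h0]
    rw [Metric.ball_zero, show w.im ^ 2 - 0 ^ 2 = w.im ^ 2 by ring,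
      Real.sqrt_sq hb.le, div_self (ne_of_gt hb)]
    simp
  set a : ℝ := w.re
  set b : ℝ := w.im with hb_def
  have hb : 0 < b := hR.trans hRc
  -- Step 1: withDensity
  rw [hypMeasure, withDensity_apply _ measurableSet_ball]
  -- Step 2: transfer to ℝ × ℝ
  have hmp := Complex.volume_preserving_equiv_real_prod
  have hemb := Complex.measurableEquivRealProd.measurableEmbedding
  have step2 : ∫⁻ z in Metric.ball w R, ENNReal.ofReal (z.im ^ 2)⁻¹ ∂volume
      = ∫⁻ p in Complex.measurableEquivRealProd '' Metric.ball w R,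
          ENNReal.ofReal (p.2 ^ 2)⁻¹ ∂volume := by
    rw [← hmp.setLIntegral_comp_emb hemb (fun p : ℝ × ℝ => ENNReal.ofReal (p.2 ^ 2)⁻¹)
      (Metric.ball w R)]
    rfl
  rw [step2]
  -- Step 3: identify the image set
  set S : Set (ℝ × ℝ) := {p | (p.1 - a) ^ 2 + (p.2 - b) ^ 2 < R ^ 2} with hS_def
  have himg : Complex.measurableEquivRealProd '' Metric.ball w R = S := by
    ext p
    constructor
    · rintro ⟨z, hz, rfl⟩
      rw [Metric.mem_ball, Complex.dist_eq_re_im] at hz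
      have := Real.sqrt_lt_sqrt (by positivity) (Real.sq_sqrt (by positivity : (0:ℝ) ≤ (z.re - a)^2 + (z.im - b)^2) ▸ hz)
      rw [hS_def]
      simp only [Complex.measurableEquivRealProd_apply, Set.mem_setOf_eq]
      nlinarith [Real.sq_sqrt (by positivity : (0:ℝ) ≤ (z.re - a)^2 + (z.im - b)^2), hz,
        Real.sqrt_nonneg ((z.re - a)^2 + (z.im - b)^2)]
    · intro hp
      refine ⟨Complex.measurableEquivRealProd.symm p, ?_, by simp⟩
      rw [Metric.mem_ball, Complex.dist_eq_re_im]
      simp only [Complex.measurableEquivRealProd_symm_apply]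
      rw [hS_def, Set.mem_setOf_eq] at hp
      calc Real.sqrt ((p.1 - a) ^ 2 + (p.2 - b) ^ 2) < Real.sqrt (R ^ 2) :=
            Real.sqrt_lt_sqrt (by positivity) hp
        _ = R := Real.sqrt_sq hR.le
  rw [himg]
  -- Step 4: Tonelli
  have hSmeas : MeasurableSet S :=
    (isOpen_lt (by fun_prop) continuous_const).measurableSet
  have hfmeas : Measurable fun p : ℝ × ℝ => ENNReal.ofReal (p.2 ^ 2)⁻¹ := by fun_prop
  rw [← lintegral_indicator hSmeas, Measure.volume_eq_prod, lintegral_prod_symm _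
    (hfmeas.indicator hSmeas).aemeasurable]
  -- Step 5: inner slice integral
  have hslice : ∀ y : ℝ,
      ∫⁻ x, S.indicator (fun p : ℝ × ℝ => ENNReal.ofReal (p.2 ^ 2)⁻¹) (x, y) ∂volume
        = ENNReal.ofReal (y ^ 2)⁻¹
            * ENNReal.ofReal (2 * Real.sqrt (R ^ 2 - (y - b) ^ 2)) := by
    intro y
    set t : ℝ := Real.sqrt (R ^ 2 - (y - b) ^ 2) with ht_def
    have hset : ∀ x : ℝ,
        S.indicator (fun p : ℝ × ℝ => ENNReal.ofReal (p.2 ^ 2)⁻¹) (x, y)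
          = (Ioo (a - t) (a + t)).indicator (fun _ => ENNReal.ofReal (y ^ 2)⁻¹) x := by
      intro x
      have hmem : (x, y) ∈ S ↔ x ∈ Ioo (a - t) (a + t) := by
        rw [hS_def, Set.mem_setOf_eq, Set.mem_Ioo]
        by_cases hpos : 0 < R ^ 2 - (y - b) ^ 2
        · have ht2 : t ^ 2 = R ^ 2 - (y - b) ^ 2 := Real.sq_sqrt hpos.le
          have htpos : 0 < t := Real.sqrt_pos.2 hpos
          constructor
          · intro h; constructor <;> nlinarith
          · rintro ⟨h1, h2⟩; nlinarith
        · have ht0 : t = 0 := Real.sqrt_eq_zero'.2 (by linarith [not_lt.1 hpos])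
          constructor
          · intro h; nlinarith [not_lt.1 hpos]
          · rintro ⟨h1, h2⟩; rw [ht0] at h1 h2; linarith
      simp only [Set.indicator]
      exact if_congr hmem rfl rfl
    simp_rw [hset]
    rw [lintegral_indicator measurableSet_Ioo, setLIntegral_const, Real.volume_Ioo,
      show a + t - (a - t) = 2 * t by ring]
  simp_rw [hslice]
  -- Step 6: reduce to an interval integral
  have hbR : 0 < b - R := by linarith
  have hout : ∀ y : ℝ,
      ENNReal.ofReal (y ^ 2)⁻¹ * ENNReal.ofReal (2 * Real.sqrt (R ^ 2 - (y - b) ^ 2))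
        = (Ioo (b - R) (b + R)).indicator
            (fun y => ENNReal.ofReal (2 * Real.sqrt (R ^ 2 - (y - b) ^ 2) / y ^ 2)) y := by
    intro y
    by_cases hy : y ∈ Ioo (b - R) (b + R)
    · rw [Set.indicator_of_mem hy]
      rw [← ENNReal.ofReal_mul (by positivity)]
      congr 1
      field_simp
    · rw [Set.indicator_of_notMem hy]
      have : R ^ 2 - (y - b) ^ 2 ≤ 0 := by
        rw [Set.mem_Ioo, not_and_or] at hy
        rcases hy with h | h <;> [skip; skip] <;> push_neg at h <;> nlinarith
      rw [Real.sqrt_eq_zero'.2 this]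
      simp
  simp_rw [hout]
  rw [lintegral_indicator measurableSet_Ioo]
  -- Step 7: convert to Bochner integral and apply key_integral
  have hy0' : ∀ y ∈ Icc (b - R) (b + R), y ≠ 0 := fun y hy =>
    ne_of_gt (lt_of_lt_of_le hbR hy.1)
  have hcont : ContinuousOn (fun y => 2 * Real.sqrt (R ^ 2 - (y - b) ^ 2) / y ^ 2)
      (Icc (b - R) (b + R)) :=
    ContinuousOn.div (by fun_prop) (by fun_prop)
      (fun y hy => pow_ne_zero _ (hy0' y hy))
  have hinteg : IntegrableOn (fun y => 2 * Real.sqrt (R ^ 2 - (y - b) ^ 2) / y ^ 2)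
      (Ioo (b - R) (b + R)) volume :=
    (hcont.integrableOn_Icc).mono_set Ioo_subset_Icc_self
  rw [← ofReal_integral_eq_lintegral_ofReal hinteg
    (Filter.Eventually.of_forall fun y => by positivity)]
  congr 1
  have hab : b - R ≤ b + R := by linarith
  calc ∫ y in Ioo (b - R) (b + R), 2 * Real.sqrt (R ^ 2 - (y - b) ^ 2) / y ^ 2
      = ∫ y in Ioc (b - R) (b + R), 2 * Real.sqrt (R ^ 2 - (y - b) ^ 2) / y ^ 2 :=
        MeasureTheory.integral_Ioc_eq_integral_Ioo.symm
    _ = ∫ y in (b - R)..(b + R), 2 * Real.sqrt (R ^ 2 - (y - b) ^ 2) / y ^ 2 :=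
        (intervalIntegral.integral_of_le hab).symm
    _ = 2 * π * (b / Real.sqrt (b ^ 2 - R ^ 2) - 1) := key_integral hR hRc

open UpperHalfPlane

lemma hyp_ball_val (z : ℍ) {ρ : ℝ} (hρ : 0 ≤ ρ) :
    2 * π * ((z.center ρ : ℂ).im
        / Real.sqrt ((z.center ρ : ℂ).im ^ 2 - (z.im * Real.sinh ρ) ^ 2) - 1)
      = 2 * π * (Real.cosh ρ - 1) := by
  have him : (z.center ρ : ℂ).im = z.im * Real.cosh ρ := by
    rw [UpperHalfPlane.coe_im, UpperHalfPlane.center_im]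
  rw [him]
  have h1 : (z.im * Real.cosh ρ) ^ 2 - (z.im * Real.sinh ρ) ^ 2 = z.im ^ 2 := by
    have := Real.cosh_sq ρ
    nlinarith
  rw [h1, Real.sqrt_sq z.im_pos.le]
  field_simp

lemma radius_lt (z : ℍ) (ρ : ℝ) : z.im * Real.sinh ρ < (z.center ρ : ℂ).im := by
  rw [UpperHalfPlane.coe_im, UpperHalfPlane.center_im]
  have h1 : Real.sinh ρ < Real.cosh ρ := Real.sinh_lt_cosh ρ
  exact mul_lt_mul_of_pos_left h1 z.im_pos

lemma hypMeasure_image_ball (z : ℍ) {ρ : ℝ} (hρ : 0 ≤ ρ) :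
    hypMeasure (((↑) : ℍ → ℂ) '' Metric.ball z ρ)
      = ENNReal.ofReal (2 * π * (Real.cosh ρ - 1)) := by
  rw [UpperHalfPlane.image_coe_ball,
    hypMeasure_ball (by positivity : (0:ℝ) ≤ z.im * Real.sinh ρ) (radius_lt z ρ),
    hyp_ball_val z hρ]

lemma hypMeasure_image_closedBall (z : ℍ) {ρ : ℝ} (hρ : 0 ≤ ρ) :
    hypMeasure (((↑) : ℍ → ℂ) '' Metric.closedBall z ρ)
      = ENNReal.ofReal (2 * π * (Real.cosh ρ - 1)) := by
  rw [UpperHalfPlane.image_coe_closedBall]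
  have hsphere : hypMeasure (Metric.sphere ((z.center ρ : ℂ)) (z.im * Real.sinh ρ)) = 0 :=
    MeasureTheory.withDensity_absolutelyContinuous _ _ (Measure.addHaar_sphere _ _ _)
  have hball := hypMeasure_ball (by positivity : (0:ℝ) ≤ z.im * Real.sinh ρ) (radius_lt z ρ)
  apply le_antisymm
  · calc hypMeasure (Metric.closedBall _ _)
        ≤ hypMeasure (Metric.ball ((z.center ρ : ℂ)) (z.im * Real.sinh ρ))
          + hypMeasure (Metric.sphere ((z.center ρ : ℂ)) (z.im * Real.sinh ρ)) := by
          rw [← Metric.ball_union_sphere]; exact measure_union_le _ _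
      _ = ENNReal.ofReal (2 * π * (Real.cosh ρ - 1)) := by
          rw [hsphere, hball, hyp_ball_val z hρ, add_zero]
  · rw [← hyp_ball_val z hρ, ← hball]
    exact measure_mono Metric.ball_subset_closedBall

/-- Packing bound in the hyperbolic plane: if the points of `Y` are pairwise at distance
greater than `r` and all lie in the annulus of radii `d - 2r` and `d + 2r` around `x`
(with `5r ≤ 2d`), then `Y` is finite of cardinality at most
`sinh(5r/2) * sinh(d) / sinh²(r/4)`. -/
theorem upperHalfPlane_annulus_packing (d r : ℝ) (hd : 0 < d) (hr : 0 < r)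
    (hrd : 5 * r ≤ 2 * d) (x : UpperHalfPlane) (Y : Set UpperHalfPlane)
    (hsep : ∀ y ∈ Y, ∀ z ∈ Y, y ≠ z → r < dist y z)
    (hann : ∀ y ∈ Y, d - 2 * r ≤ dist x y ∧ dist x y ≤ d + 2 * r) :
    Y.Finite ∧
      (Y.ncard : ℝ) ≤ Real.sinh (5 * r / 2) * Real.sinh d / (Real.sinh (r / 4)) ^ 2 := by
  set R1 : ℝ := d - 5 * r / 2 with hR1_def
  set R2 : ℝ := d + 5 * r / 2 with hR2_def
  have hR1 : 0 ≤ R1 := by rw [hR1_def]; linarith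
  have hR2 : 0 ≤ R2 := by rw [hR2_def]; linarith
  have hr2 : 0 ≤ r / 2 := by linarith
  set ar : ℝ := 2 * π * (Real.cosh (r / 2) - 1) with har_def
  set AR : ℝ := 2 * π * (Real.cosh R2 - Real.cosh R1) with hAR_def
  have har_pos : 0 < ar := by
    have h1 : 1 < Real.cosh (r / 2) := by
      rw [Real.one_lt_cosh]; positivity
    have := Real.pi_pos
    rw [har_def]; nlinarith
  have hAR_nonneg : 0 ≤ AR := by
    have h1 : Real.cosh R1 ≤ Real.cosh R2 := by
      rw [Real.cosh_le_cosh, abs_of_nonneg hR1, abs_of_nonneg hR2]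
      rw [hR1_def, hR2_def]; linarith
    have := Real.pi_pos
    rw [hAR_def]; nlinarith
  -- the key cardinality bound for finite subsets
  have key : ∀ F : Finset UpperHalfPlane, ↑F ⊆ Y → (F.card : ℝ) ≤ AR / ar := by
    intro F hF
    -- small balls, as subsets of ℂ
    set B : UpperHalfPlane → Set ℂ := fun y => ((↑) : UpperHalfPlane → ℂ) '' Metric.ball y (r / 2)
      with hB_def
    set E : Set ℂ := (((↑) : UpperHalfPlane → ℂ) '' Metric.closedBall x R2)
      \ (((↑) : UpperHalfPlane → ℂ) '' Metric.ball x R1) with hE_def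
    have hBmeas : ∀ y : UpperHalfPlane, MeasurableSet (B y) := by
      intro y
      simp only [hB_def]
      rw [UpperHalfPlane.image_coe_ball]
      exact measurableSet_ball
    have hBsub : ∀ y ∈ Y, B y ⊆ E := by
      intro y hy u hu
      obtain ⟨w, hw, rfl⟩ := hu
      rw [Metric.mem_ball] at hw
      have h2 := (hann y hy).2
      have h1 := (hann y hy).1
      constructor
      · refine ⟨w, ?_, rfl⟩
        rw [Metric.mem_closedBall, hR2_def]
        have ht := dist_triangle w y x
        have e1 : dist w y = dist y w := dist_comm _ _
        have e2 : dist y x = dist x y := dist_comm _ _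
        linarith
      · rintro ⟨w', hw', hww'⟩
        have hwe : w' = w := UpperHalfPlane.ext hww'
        subst hwe
        rw [Metric.mem_ball, hR1_def] at hw'
        have ht := dist_triangle x w' y
        have e1 : dist w' y = dist y w' := dist_comm _ _
        have e2 : dist x w' = dist w' x := dist_comm _ _
        linarith
    have hdisj : (↑F : Set UpperHalfPlane).PairwiseDisjoint B := by
      intro y hy z hz hyz
      have hsep' := hsep y (hF hy) z (hF hz) hyz
      simp only [hB_def]
      apply Set.disjoint_image_of_injective (fun a b h => UpperHalfPlane.ext h)
      rw [Set.disjoint_left]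
      intro w hw1 hw2
      rw [Metric.mem_ball] at hw1 hw2
      have ht := dist_triangle y w z
      have e1 : dist y w = dist w y := dist_comm _ _
      have e2 : dist w z = dist z w := dist_comm _ _
      linarith
    have hsum : ∑ y ∈ F, hypMeasure (B y) = hypMeasure (⋃ y ∈ F, B y) :=
      (measure_biUnion_finset hdisj fun y _ => hBmeas y).symm
    have hE_meas : hypMeasure (⋃ y ∈ F, B y) ≤ hypMeasure E :=
      measure_mono (Set.iUnion₂_subset fun y hy => hBsub y (hF hy))
    have hEval : hypMeasure E = ENNReal.ofReal AR := by
      simp only [hE_def]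
      rw [measure_diff
        (Set.image_mono (Metric.ball_subset_closedBall.trans
          (Metric.closedBall_subset_closedBall (by rw [hR1_def, hR2_def]; linarith))))
        (by rw [UpperHalfPlane.image_coe_ball]; exact measurableSet_ball.nullMeasurableSet)
        (by rw [hypMeasure_image_ball x hR1]; exact ENNReal.ofReal_ne_top),
        hypMeasure_image_closedBall x hR2, hypMeasure_image_ball x hR1,
        ← ENNReal.ofReal_sub _ (by nlinarith [Real.pi_pos, Real.one_le_cosh R1] : 
          0 ≤ 2 * π * (Real.cosh R1 - 1))]
      congr 1
      rw [hAR_def]; ring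
    have hBval : ∀ y : UpperHalfPlane, hypMeasure (B y) = ENNReal.ofReal ar := by
      intro y
      simp only [hB_def]
      rw [hypMeasure_image_ball y hr2, har_def]
    have hmain : (F.card : ℝ≥0∞) * ENNReal.ofReal ar ≤ ENNReal.ofReal AR := by
      calc (F.card : ℝ≥0∞) * ENNReal.ofReal ar = ∑ y ∈ F, hypMeasure (B y) := by
            simp [hBval, Finset.sum_const, nsmul_eq_mul]
        _ = hypMeasure (⋃ y ∈ F, B y) := hsum
        _ ≤ hypMeasure E := hE_meas
        _ = ENNReal.ofReal AR := hEval
    have hreal : (F.card : ℝ) * ar ≤ AR := by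
      have h1 : ENNReal.ofReal ((F.card : ℝ) * ar) ≤ ENNReal.ofReal AR := by
        rwa [ENNReal.ofReal_mul (by positivity), ENNReal.ofReal_natCast]
      exact (ENNReal.ofReal_le_ofReal_iff hAR_nonneg).1 h1
    rw [le_div_iff₀ har_pos]
    exact hreal
  -- finiteness
  have hfin : Y.Finite := by
    by_contra hinf
    replace hinf : Y.Infinite := hinf
    obtain ⟨F, hFsub, hFcard⟩ := hinf.exists_subset_card_eq (⌈AR / ar⌉₊ + 1)
    have := key F hFsub
    rw [hFcard] at this
    push_cast at this
    have h2 := Nat.le_ceil (AR / ar)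
    linarith
  refine ⟨hfin, ?_⟩
  -- cardinality bound
  have hcard := key hfin.toFinset (by simp)
  rw [← Set.ncard_eq_toFinset_card Y hfin] at hcard
  refine hcard.trans ?_
  -- identity: AR / ar = sinh (5r/2) sinh d / sinh (r/4) ^ 2
  have hsinh4 : 0 < Real.sinh (r / 4) := Real.sinh_pos_iff.2 (by positivity)
  have hcosh_diff : Real.cosh R2 - Real.cosh R1 = 2 * Real.sinh d * Real.sinh (5 * r / 2) := by
    rw [hR2_def, hR1_def, show d + 5 * r / 2 = d + 5 * r / 2 from rfl,
      show d - 5 * r / 2 = d - 5 * r / 2 from rfl, Real.cosh_add, Real.cosh_sub]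
    ring
  have hcosh_half : Real.cosh (r / 2) - 1 = 2 * Real.sinh (r / 4) ^ 2 := by
    rw [show r / 2 = 2 * (r / 4) by ring, Real.cosh_two_mul, Real.cosh_sq]
    ring
  rw [hAR_def, har_def, hcosh_diff, hcosh_half]
  apply le_of_eq
  rw [div_eq_div_iff (by positivity) (by positivity)]
  ring
end

section
/- Let E = EuclideanSpace ℝ (Fin n), let Λ be a ℤ-lattice in E (a discrete subgroup spanning E over ℝ), and let T = E ⧸ Λ be the flat torus equipped with the quotient norm (quotient metric). Then the chromatic number of T is at least the 1-chromatic number of E: sup{χ(T, d) : d > 0} ≥ χ(E, 1). -/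
/-- Separation for a discrete subgroup: nonzero elements have norm bounded below. -/
lemma exists_sep_of_discrete {E : Type*} [NormedAddCommGroup E]
    (Λ : AddSubgroup E) [DiscreteTopology Λ] :
    ∃ ε > 0, ∀ v ∈ Λ, v ≠ 0 → ε ≤ ‖v‖ := by
  have h0 : IsOpen ({0} : Set Λ) := isOpen_discrete _
  rw [Metric.isOpen_iff] at h0
  obtain ⟨ε, hε, hball⟩ := h0 0 rfl
  refine ⟨ε, hε, fun v hv hv0 => ?_⟩
  by_contra h
  push_neg at h
  have hmem : (⟨v, hv⟩ : Λ) ∈ Metric.ball (0 : Λ) ε := by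
    rw [Metric.mem_ball, Subtype.dist_eq]
    simpa [dist_zero_right] using h
  have := hball hmem
  simp only [Set.mem_singleton_iff] at this
  exact hv0 (by simpa using congrArg Subtype.val this)

/-- For vectors of norm at most half the separation constant, the quotient norm equals
the norm. -/
lemma quot_norm_eq_of_small {E : Type*} [NormedAddCommGroup E]
    (Λ : AddSubgroup E) {ε : ℝ} (hsep : ∀ v ∈ Λ, v ≠ 0 → ε ≤ ‖v‖)
    (z : E) (hz : ‖z‖ ≤ ε / 2) : ‖((z : E ⧸ Λ))‖ = ‖z‖ := by
  rw [QuotientAddGroup.norm_mk]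
  refine le_antisymm ?_ ?_
  · simpa [dist_zero_right] using Metric.infDist_le_dist_of_mem (Λ.zero_mem)
  · rw [← not_lt, Metric.infDist_lt_iff ⟨0, Λ.zero_mem⟩]
    rintro ⟨v, hv, hlt⟩
    rcases eq_or_ne v 0 with rfl | hv0
    · simp [dist_eq_norm] at hlt
    · have h1 : ε ≤ ‖v‖ := hsep v hv hv0
      have h2 : ‖v‖ - ‖z‖ ≤ ‖v - z‖ := by
        have := norm_sub_norm_le v z
        linarith [this]
      rw [dist_eq_norm, norm_sub_rev] at hlt
      linarith

/-- For a `ℤ`-lattice `Λ` in Euclidean space `E`, the chromatic number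
`sup {χ(E ⧸ Λ, d) : d > 0}` of the flat torus `E ⧸ Λ` (with the quotient norm) is at least
the `1`-chromatic number of `E`. -/
theorem flatTorus_chromatic_ge (n : ℕ) (Λ : Submodule ℤ (EuclideanSpace ℝ (Fin n)))
    [DiscreteTopology Λ] [IsZLattice ℝ Λ] :
    (distGraph (EuclideanSpace ℝ (Fin n)) 1).chromaticNumber ≤
      ⨆ d ∈ Set.Ioi (0 : ℝ),
        (distGraph ((EuclideanSpace ℝ (Fin n)) ⧸ Λ.toAddSubgroup) d).chromaticNumber := by
  set E := EuclideanSpace ℝ (Fin n)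
  haveI : DiscreteTopology Λ.toAddSubgroup := ‹DiscreteTopology Λ›
  obtain ⟨ε, hε, hsep⟩ := exists_sep_of_discrete Λ.toAddSubgroup
  set d : ℝ := ε / 2 with hd
  have hd0 : 0 < d := by positivity
  -- the scaling map `x ↦ d • x` descends to a graph homomorphism into the torus
  have hdist : ∀ a b : E, dist a b = 1 →
      dist ((↑(d • a) : E ⧸ Λ.toAddSubgroup)) (↑(d • b)) = d := by
    intro a b hab
    have hnorm : ‖d • (a - b)‖ = d := by
      rw [norm_smul, Real.norm_eq_abs, abs_of_pos hd0, ← dist_eq_norm, hab, mul_one]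
    have hsmall : ‖d • (a - b)‖ ≤ ε / 2 := by rw [hnorm]
    calc dist ((↑(d • a) : E ⧸ Λ.toAddSubgroup)) (↑(d • b))
        = ‖((↑(d • a) : E ⧸ Λ.toAddSubgroup)) - ↑(d • b)‖ := dist_eq_norm _ _
      _ = ‖((↑(d • a - d • b) : E ⧸ Λ.toAddSubgroup))‖ := by
          rw [QuotientAddGroup.mk_sub]
      _ = ‖((↑(d • (a - b)) : E ⧸ Λ.toAddSubgroup))‖ := by rw [smul_sub]
      _ = ‖d • (a - b)‖ := quot_norm_eq_of_small _ hsep _ hsmall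
      _ = d := hnorm
  let hom : distGraph E 1 →g distGraph (E ⧸ Λ.toAddSubgroup) d :=
    { toFun := fun x => (↑(d • x) : E ⧸ Λ.toAddSubgroup)
      map_rel' := by
        rintro a b ⟨hne, hab⟩
        have hdab := hdist a b hab
        refine ⟨fun h => ?_, hdab⟩
        have h' : (↑(d • a) : E ⧸ Λ.toAddSubgroup) = ↑(d • b) := h
        rw [h', dist_self] at hdab
        exact absurd hdab.symm (ne_of_gt hd0) }
  refine le_trans ?_ (le_biSup _ (show d ∈ Set.Ioi (0 : ℝ) from hd0))
  apply SimpleGraph.chromaticNumber_le_of_forall_imp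
  intro m hc
  exact ⟨(Classical.choice hc).comp hom⟩
end

section
/- Let s and x be real numbers with 0 < x ≤ s ≤ 1/√2. Then arcsinh(1/x) − arccosh(s/x) > (log 2)/2. -/
/-- The inverse hyperbolic cosine of a real number (for `x ≥ 1`). -/
noncomputable def arccosh (x : ℝ) : ℝ := Real.log (x + Real.sqrt (x ^ 2 - 1))

/-- For `0 < x ≤ s ≤ 1/√2`, one has `arsinh (1/x) - arccosh (s/x) > (log 2)/2`. -/
theorem arsinh_sub_arccosh_gt (s x : ℝ) (hx0 : 0 < x) (hxs : x ≤ s)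
    (hs : s ≤ 1 / Real.sqrt 2) :
    Real.log 2 / 2 < Real.arsinh (1 / x) - arccosh (s / x) := by
  have h2 : (0:ℝ) < Real.sqrt 2 := by positivity
  have h2sq : (Real.sqrt 2) ^ 2 = 2 := Real.sq_sqrt (by norm_num)
  have hs0 : 0 < s := hx0.trans_le hxs
  have hs2 : s * Real.sqrt 2 ≤ 1 := (le_div_iff₀ h2).mp hs
  have hss : 2 * s ^ 2 ≤ 1 := by nlinarith [hs2, hs0, h2sq, h2]
  set u := Real.sqrt (1 + x ^ 2) with hu
  set v := Real.sqrt (s ^ 2 - x ^ 2) with hv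
  have hu2 : u ^ 2 = 1 + x ^ 2 := Real.sq_sqrt (by positivity)
  have hv2 : v ^ 2 = s ^ 2 - x ^ 2 := Real.sq_sqrt (by nlinarith)
  have hv0 : 0 ≤ v := Real.sqrt_nonneg _
  have hu0 : 0 ≤ u := Real.sqrt_nonneg _
  have hu1 : 1 ≤ u := by nlinarith
  have huv : Real.sqrt 2 * v < u := by
    nlinarith [mul_nonneg h2.le hv0, hx0, sq_nonneg x]
  have key : Real.sqrt 2 * (s + v) < 1 + u := by nlinarith
  -- rewrite arsinh
  have hAsqrt : Real.sqrt (1 + (1 / x) ^ 2) = u / x := by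
    rw [show 1 + (1 / x) ^ 2 = (1 + x ^ 2) / x ^ 2 by field_simp; ring,
      Real.sqrt_div (by positivity), Real.sqrt_sq hx0.le]
  have hA : Real.arsinh (1 / x) = Real.log (1 + u) - Real.log x := by
    rw [Real.arsinh, hAsqrt, ← add_div,
      Real.log_div (by positivity) (ne_of_gt hx0)]
  have hBsqrt : Real.sqrt ((s / x) ^ 2 - 1) = v / x := by
    rw [show (s / x) ^ 2 - 1 = (s ^ 2 - x ^ 2) / x ^ 2 by field_simp,
      Real.sqrt_div (by nlinarith), Real.sqrt_sq hx0.le]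
  have hsv : 0 < s + v := by linarith
  have hB : arccosh (s / x) = Real.log (s + v) - Real.log x := by
    rw [arccosh, hBsqrt, ← add_div, Real.log_div (by positivity) (ne_of_gt hx0)]
  rw [hA, hB]
  have hlog2 : Real.log 2 / 2 = Real.log (Real.sqrt 2) := (Real.log_sqrt (by norm_num)).symm
  rw [hlog2]
  have : Real.log (Real.sqrt 2) + Real.log (s + v) < Real.log (1 + u) := by
    rw [← Real.log_mul (ne_of_gt h2) (ne_of_gt hsv)]
    exact Real.log_lt_log (by positivity) key
  linarith
end
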